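/- Let q be a prime power and let V be a t-dimensional vector space over F_q, where t ≥ 2 is even, equipped with a non-degenerate alternating bilinear form B. Then for every integer k with 1 ≤ k ≤ t−1, the number of k-dimensional F_q-subspaces W of V satisfying W ∩ W^⊥ = {0} equals 0 if k is odd, and equals q^{k(t−k)/2} [t/2, k/2]_{q²} if k is even. -/

import Mathlib

/-- Gaussian binomial coefficient with rational base `Q`:
`[a, b]_Q = ∏_{i=0}^{b-1} (Q^a - Q^i)/(Q^b - Q^i)`. -/
def gbinom (Q : ℚ) (a b : ℕ) : ℚ :=
  ∏ i ∈ Finset.range b, (Q ^ a - Q ^ i) / (Q ^ b - Q ^ i)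

open Module LinearMap LinearMap.BilinForm Finset

variable {F : Type} [Field F]

def SympPred {V : Type} [AddCommGroup V] [Module F V]
    (B : LinearMap.BilinForm F V) (m : ℕ) (e f : Fin m → V) : Prop :=
  (∀ i j, B (e i) (e j) = 0) ∧ (∀ i j, B (f i) (f j) = 0) ∧
  (∀ i j, B (e i) (f j) = if i = j then (1:F) else 0)

def SS {V : Type} [AddCommGroup V] [Module F V] (B : LinearMap.BilinForm F V)
    (W : Submodule F V) (m : ℕ) : Type :=
  {p : (Fin m → V) × (Fin m → V) //
    (∀ i, p.1 i ∈ W) ∧ (∀ i, p.2 i ∈ W) ∧ SympPred B m p.1 p.2}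

variable {V : Type} [AddCommGroup V] [Module F V]

lemma mem_orth_pair (B : LinearMap.BilinForm F V) {a b v : V} (h1 : B a v = 0) (h2 : B b v = 0) :
    v ∈ B.orthogonal (Submodule.span F {a, b}) := by
  intro u hu
  obtain ⟨x, y, rfl⟩ := Submodule.mem_span_pair.mp hu
  show B _ v = 0
  rw [map_add, map_smul, map_smul, LinearMap.add_apply, LinearMap.smul_apply,
    LinearMap.smul_apply, h1, h2]
  simp

lemma orth_pair_left (B : LinearMap.BilinForm F V) {a b v : V}
    (hv : v ∈ B.orthogonal (Submodule.span F {a, b})) : B a v = 0 :=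
  hv a (Submodule.subset_span (Set.mem_insert _ _))

lemma orth_pair_right (B : LinearMap.BilinForm F V) {a b v : V}
    (hv : v ∈ B.orthogonal (Submodule.span F {a, b})) : B b v = 0 :=
  hv b (Submodule.subset_span (Set.mem_insert_of_mem _ rfl))


lemma alt_zero_comm (B : LinearMap.BilinForm F V) (halt : B.IsAlt) {x y : V} (h : B x y = 0) :
    B y x = 0 := by rw [← halt.neg_eq, h, neg_zero]

/-- sequences in a submodule correspond to sequences in the restricted space -/
def SS_sub_equiv (B : LinearMap.BilinForm F V) (W : Submodule F V) (m : ℕ) :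
    SS B W m ≃ SS (B.restrict W) (⊤ : Submodule F W) m where
  toFun s :=
    ⟨(fun i => ⟨s.1.1 i, s.2.1 i⟩, fun i => ⟨s.1.2 i, s.2.2.1 i⟩),
      fun _ => trivial, fun _ => trivial,
      fun i j => s.2.2.2.1 i j, fun i j => s.2.2.2.2.1 i j, fun i j => s.2.2.2.2.2 i j⟩
  invFun s :=
    ⟨(fun i => (s.1.1 i : V), fun i => (s.1.2 i : V)),
      fun i => (s.1.1 i).2, fun i => (s.1.2 i).2,
      fun i j => s.2.2.2.1 i j, fun i j => s.2.2.2.2.1 i j, fun i j => s.2.2.2.2.2 i j⟩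
  left_inv s := rfl
  right_inv s := rfl

/-- peeling off a hyperbolic pair -/
def SS_succ_equiv (B : LinearMap.BilinForm F V) (halt : B.IsAlt) (m : ℕ) :
    SS B (⊤ : Submodule F V) (m + 1) ≃
      Σ _p : {p : V × V // B p.1 p.2 = 1},
        SS B (B.orthogonal (Submodule.span F {_p.1.1, _p.1.2})) m where
  toFun s :=
    ⟨⟨(s.1.1 0, s.1.2 0), by simpa using s.2.2.2.2.2 0 0⟩,
      ⟨(fun i => s.1.1 i.succ, fun i => s.1.2 i.succ),
        fun i => mem_orth_pair B (s.2.2.2.1 0 i.succ)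
          (alt_zero_comm B halt (by
            rw [s.2.2.2.2.2 i.succ 0, if_neg (Fin.succ_ne_zero i)])),
        fun i => mem_orth_pair B (by
            rw [s.2.2.2.2.2 0 i.succ, if_neg (Ne.symm (Fin.succ_ne_zero i))])
          (s.2.2.2.2.1 0 i.succ),
        fun i j => s.2.2.2.1 i.succ j.succ, fun i j => s.2.2.2.2.1 i.succ j.succ,
        fun i j => by simpa [Fin.succ_inj] using s.2.2.2.2.2 i.succ j.succ⟩⟩
  invFun x :=
    ⟨(Fin.cons x.1.1.1 x.2.1.1, Fin.cons x.1.1.2 x.2.1.2), fun _ => trivial, fun _ => trivial,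
      by
        obtain ⟨⟨⟨a, b⟩, hab⟩, ⟨⟨e, f⟩, hme, hmf, h1, h2, h3⟩⟩ := x
        refine ⟨fun i j => ?_, fun i j => ?_, fun i j => ?_⟩
        · refine Fin.cases ?_ (fun i' => ?_) i <;> refine Fin.cases ?_ (fun j' => ?_) j
          · simpa using halt a
          · simpa using orth_pair_left B (hme j')
          · simpa using alt_zero_comm B halt (orth_pair_left B (hme i'))
          · simpa using h1 i' j'
        · refine Fin.cases ?_ (fun i' => ?_) i <;> refine Fin.cases ?_ (fun j' => ?_) j
          · simpa using halt b
          · simpa using orth_pair_right B (hmf j')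
          · simpa using alt_zero_comm B halt (orth_pair_right B (hmf i'))
          · simpa using h2 i' j'
        · refine Fin.cases ?_ (fun i' => ?_) i <;> refine Fin.cases ?_ (fun j' => ?_) j
          · simpa using hab
          · simp [orth_pair_left B (hmf j'), (Fin.succ_ne_zero j').symm]
          · simp [alt_zero_comm B halt (orth_pair_right B (hme i')), Fin.succ_ne_zero]
          · simpa [Fin.succ_inj] using h3 i' j'⟩
  left_inv s := Subtype.ext (Prod.ext (Fin.cons_self_tail _) (Fin.cons_self_tail _))
  right_inv x := rfl


section FD
variable [FiniteDimensional F V]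
variable (B : LinearMap.BilinForm F V)

variable [Fintype F] in
lemma card_fiber (φ : V →ₗ[F] F) (hφ : φ ≠ 0) :
    Nat.card {f : V // φ f = 1} = Fintype.card F ^ (finrank F V - 1) := by
  have : Finite V := Module.finite_of_finite F
  -- φ is surjective
  obtain ⟨x, hx⟩ : ∃ x, φ x ≠ 0 := by
    by_contra h; push_neg at h; exact hφ (by ext v; simp [h])
  set f₀ : V := (φ x)⁻¹ • x with hf₀
  have h1 : φ f₀ = 1 := by simp [hf₀, inv_mul_cancel₀ hx]
  have e : {f : V // φ f = 1} ≃ LinearMap.ker φ :=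
    { toFun := fun p => ⟨p.1 - f₀, by simp [p.2, h1]⟩
      invFun := fun k => ⟨k.1 + f₀, by
        have := k.2
        simp only [LinearMap.mem_ker] at this
        simp [this, h1]⟩
      left_inv := fun p => by ext; simp
      right_inv := fun k => by ext; simp }
  rw [Nat.card_congr e]
  have hker : finrank F (LinearMap.ker φ) = finrank F V - 1 := by
    have hr := LinearMap.finrank_range_add_finrank_ker φ
    have hrange : LinearMap.range φ = ⊤ := by
      rw [LinearMap.range_eq_top]
      intro c
      exact ⟨c • f₀, by simp [h1]⟩
    rw [hrange, finrank_top, finrank_self] at hr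
    omega
  have : Fintype (LinearMap.ker φ) := Fintype.ofFinite _
  rw [Nat.card_eq_fintype_card, card_eq_pow_finrank (K := F), hker]

variable [Fintype F] in
lemma card_hyp (B : LinearMap.BilinForm F V) (hnd : B.Nondegenerate) :
    Nat.card {p : V × V // B p.1 p.2 = 1} =
      (Fintype.card F ^ finrank F V - 1) * Fintype.card F ^ (finrank F V - 1) := by
  have : Finite V := Module.finite_of_finite F
  have : Fintype V := Fintype.ofFinite V
  have e1 : {p : V × V // B p.1 p.2 = 1} ≃ Σ e : V, {f : V // B e f = 1} :=
    { toFun := fun p => ⟨p.1.1, p.1.2, p.2⟩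
      invFun := fun x => ⟨(x.1, x.2.1), x.2.2⟩
      left_inv := fun p => rfl
      right_inv := fun x => rfl }
  classical
  have : ∀ e : V, Fintype {f : V // B e f = 1} := fun e => Fintype.ofFinite _
  rw [Nat.card_congr e1, Nat.card_eq_fintype_card, Fintype.card_sigma]
  have h0 : Fintype.card {f : V // B (0:V) f = 1} = 0 := by
    rw [Fintype.card_eq_zero_iff]
    exact ⟨fun ⟨f, hf⟩ => by simp at hf⟩
  rw [← Finset.sum_erase (f := fun e : V => Fintype.card {f : V // B e f = 1}) Finset.univ h0]
  have hval : ∀ e ∈ Finset.univ.erase (0:V),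
      Fintype.card {f : V // B e f = 1} = Fintype.card F ^ (finrank F V - 1) := by
    intro e he
    have hne : e ≠ 0 := Finset.ne_of_mem_erase he
    have hBe : (B e : V →ₗ[F] F) ≠ 0 := by
      intro h
      exact hne (hnd.1 e (fun w => by rw [h]; rfl))
    rw [← Nat.card_eq_fintype_card]
    exact card_fiber (B e) hBe
  rw [Finset.sum_congr rfl hval, Finset.sum_const, Finset.card_erase_of_mem (Finset.mem_univ _),
    Finset.card_univ, card_eq_pow_finrank (K := F) (V := V), smul_eq_mul]

lemma span_pair_restrict_nondeg (halt : B.IsAlt) {a b : V} (hab : B a b = 1) :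
    (B.restrict (Submodule.span F {a, b})).Nondegenerate := by
  have ha : a ∈ Submodule.span F ({a, b} : Set V) := Submodule.subset_span (Set.mem_insert _ _)
  have hb : b ∈ Submodule.span F ({a, b} : Set V) := Submodule.subset_span
    (Set.mem_insert_of_mem _ rfl)
  have hba : B b a = -1 := by rw [← halt.neg_eq, hab]
  refine (LinearMap.IsRefl.nondegenerate_iff_separatingLeft (B := B.restrict _) (fun x y hxy => halt.isRefl _ _ hxy)).mpr ?_
  rintro ⟨v, hv⟩ h
  obtain ⟨x, y, rfl⟩ := Submodule.mem_span_pair.mp hv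
  have h1 : x * B a a + y * B b a = 0 := by
    have := h ⟨a, ha⟩
    simpa [map_add, map_smul, smul_eq_mul] using this
  have h2 : x * B a b + y * B b b = 0 := by
    have := h ⟨b, hb⟩
    simpa [map_add, map_smul, smul_eq_mul] using this
  rw [halt a, hba] at h1
  rw [halt b, hab] at h2
  have hy : y = 0 := by linear_combination -h1
  have hx : x = 0 := by linear_combination h2
  ext
  simp [hx, hy]

lemma finrank_span_hyp_pair (halt : B.IsAlt) {a b : V} (hab : B a b = 1) :
    finrank F (Submodule.span F ({a, b} : Set V)) = 2 := by
  have hba : B b a = -1 := by rw [← halt.neg_eq, hab]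
  have li : LinearIndependent F ![a, b] := by
    rw [LinearIndependent.pair_iff]
    intro s t hst
    have h1 : B (s • a + t • b) b = s := by
      simp [map_add, map_smul, halt b, hab, smul_eq_mul]
    have h2 : B (s • a + t • b) a = -t := by
      simp [map_add, map_smul, halt a, hba, smul_eq_mul]
    rw [hst] at h1 h2
    simp only [map_zero, LinearMap.zero_apply] at h1 h2
    exact ⟨h1.symm, by linear_combination h2⟩
  have hr : ({a, b} : Set V) = Set.range ![a, b] := by
    simp only [Matrix.range_cons, Matrix.range_empty, Set.union_empty, Set.union_singleton]
    rw [Set.pair_comm]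
  rw [hr, finrank_span_eq_card li]
  simp

lemma orth_pair (halt : B.IsAlt) (hnd : B.Nondegenerate) {a b : V} (hab : B a b = 1) :
    (B.restrict (B.orthogonal (Submodule.span F {a, b}))).Nondegenerate ∧
    finrank F (B.orthogonal (Submodule.span F ({a, b} : Set V))) = finrank F V - 2 := by
  set U : Submodule F V := Submodule.span F {a, b} with hU
  have hUnd := span_pair_restrict_nondeg B halt hab
  have hcompl : IsCompl U (B.orthogonal U) :=
    B.isCompl_orthogonal_of_restrict_nondegenerate halt.isRefl hUnd
  have hfr : finrank F (B.orthogonal U) = finrank F V - 2 := by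
    rw [finrank_orthogonal hnd, finrank_span_hyp_pair B halt hab]
  refine ⟨?_, hfr⟩
  refine (LinearMap.IsRefl.nondegenerate_iff_separatingLeft (B := B.restrict _) (fun x y hxy => halt.isRefl _ _ hxy)).mpr ?_
  rintro ⟨v, hv⟩ h
  have hvU : ∀ u ∈ U, B v u = 0 := fun u hu => halt.isRefl _ _ (hv u hu)
  have hvO : ∀ w ∈ B.orthogonal U, B v w = 0 := fun w hw => by
    have := h ⟨w, hw⟩
    simpa using this
  have : v = 0 := by
    apply hnd.1
    intro w
    have hw : w ∈ U ⊔ B.orthogonal U := by rw [hcompl.sup_eq_top]; trivial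
    obtain ⟨u, hu, o, ho, rfl⟩ := Submodule.mem_sup.mp hw
    rw [map_add, hvU u hu, hvO o ho, add_zero]
  ext
  exact this

end FD

instance SS_finite (B : LinearMap.BilinForm F V) (W : Submodule F V) (m : ℕ) [Finite V] :
    Finite (SS B W m) := by
  unfold SS
  infer_instance

lemma SS_card [Fintype F] :
    ∀ (m : ℕ) (V : Type) [AddCommGroup V] [Module F V] [FiniteDimensional F V]
      (B : LinearMap.BilinForm F V), B.IsAlt → B.Nondegenerate →
      Nat.card (SS B (⊤ : Submodule F V) m) =
        ∏ i ∈ Finset.range m,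
          ((Fintype.card F ^ (finrank F V - 2*i) - 1) *
            Fintype.card F ^ (finrank F V - 2*i - 1)) := by
  intro m
  induction m with
  | zero =>
    intro V _ _ _ B halt hnd
    have h1 : Nonempty (SS B (⊤ : Submodule F V) 0) :=
      ⟨⟨(fun i => i.elim0, fun i => i.elim0), fun i => i.elim0, fun i => i.elim0,
        fun i => i.elim0, fun i => i.elim0, fun i => i.elim0⟩⟩
    have h2 : Subsingleton (SS B (⊤ : Submodule F V) 0) := by
      unfold SS; infer_instance
    simp [Nat.card_eq_one_iff_unique, h1, h2]
  | succ m ih =>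
    intro V _ _ _ B halt hnd
    classical
    have hfinV : Finite V := Module.finite_of_finite F
    set q := Fintype.card F with hq
    set d := finrank F V with hd
    letI : Fintype {p : V × V // B p.1 p.2 = 1} := Fintype.ofFinite _
    letI : ∀ p : {p : V × V // B p.1 p.2 = 1},
        Fintype (SS B (B.orthogonal (Submodule.span F {p.1.1, p.1.2})) m) :=
      fun p => Fintype.ofFinite _
    have hfib : ∀ p : {p : V × V // B p.1 p.2 = 1},
        Fintype.card (SS B (B.orthogonal (Submodule.span F {p.1.1, p.1.2})) m) =
          ∏ i ∈ Finset.range m, ((q ^ (d - 2 - 2*i) - 1) * q ^ (d - 2 - 2*i - 1)) := by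
      intro p
      obtain ⟨nd2, fr2⟩ := orth_pair B halt hnd p.2
      rw [← Nat.card_eq_fintype_card, Nat.card_congr (SS_sub_equiv B _ m),
        ih _ (B.restrict _) (fun x => halt x) nd2, fr2]
    rw [Nat.card_congr (SS_succ_equiv B halt m), Nat.card_eq_fintype_card, Fintype.card_sigma,
      Finset.sum_congr rfl (fun p _ => hfib p), Finset.sum_const, Finset.card_univ,
      ← Nat.card_eq_fintype_card, card_hyp B hnd, smul_eq_mul]
    rw [Finset.prod_range_succ']
    have h0 : d - 2*0 = d := by omega
    have h0' : d - 2*0 - 1 = d - 1 := by omega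
    rw [h0]
    have hPQ : ∀ i ∈ Finset.range m,
        ((q ^ (d - 2*(i+1)) - 1) * q ^ (d - 2*(i+1) - 1) : ℕ) =
          ((q ^ (d - 2 - 2*i) - 1) * q ^ (d - 2 - 2*i - 1)) := by
      intro i _
      rw [(show d - 2*(i+1) - 1 = d - 2 - 2*i - 1 by omega),
        (show d - 2*(i+1) = d - 2 - 2*i by omega)]
    rw [Finset.prod_congr rfl hPQ]
    ring

lemma even_finrank_of_alt_nondeg :
    ∀ (n : ℕ) (V : Type) [AddCommGroup V] [Module F V] [FiniteDimensional F V]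
      (B : LinearMap.BilinForm F V), B.IsAlt → B.Nondegenerate → finrank F V = n →
      Even n := by
  intro n
  induction n using Nat.strong_induction_on with
  | _ n ih =>
    intro V _ _ _ B halt hnd hfr
    rcases Nat.eq_zero_or_pos n with h0 | hpos
    · exact h0 ▸ Even.zero
    · obtain ⟨a, ha⟩ : ∃ v : V, v ≠ 0 := by
        rw [← hfr] at hpos
        exact Module.finrank_pos_iff_exists_ne_zero.mp hpos
      obtain ⟨w, hw⟩ : ∃ w, B a w ≠ 0 := by
        by_contra h; push_neg at h; exact ha (hnd.1 a h)
      have hab : B a ((B a w)⁻¹ • w) = 1 := by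
        rw [map_smul, smul_eq_mul, inv_mul_cancel₀ hw]
      obtain ⟨nd2, fr2⟩ := orth_pair B halt hnd hab
      have h2n : 2 ≤ n := by
        have h2 := finrank_span_hyp_pair B halt hab
        have hle := Submodule.finrank_le (Submodule.span F ({a, (B a w)⁻¹ • w} : Set V))
        omega
      have heven := ih (n - 2) (by omega) _ (B.restrict _) (fun x => halt x) nd2
        (by rw [fr2, hfr])
      obtain ⟨r, hr⟩ := heven
      exact ⟨r + 1, by omega⟩

section Span

variable [FiniteDimensional F V] (B : LinearMap.BilinForm F V)

lemma sympseq_li (halt : B.IsAlt) {m : ℕ} {e f : Fin m → V} (hp : SympPred B m e f) :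
    LinearIndependent F (Sum.elim e f) := by
  obtain ⟨h1, h2, h3⟩ := hp
  classical
  set φ : V →ₗ[F] ((Fin m ⊕ Fin m) → F) :=
    LinearMap.pi (fun s => Sum.elim (fun j => (B.flip (f j) : V →ₗ[F] F))
      (fun j => -(B.flip (e j))) s) with hφ
  have key : ∀ s, φ (Sum.elim e f s) = Pi.single s (1:F) := by
    intro s
    funext t
    rcases s with i | i <;> rcases t with j | j
    · show B (e i) (f j) = (Pi.single (Sum.inl i) (1:F) : Fin m ⊕ Fin m → F) (Sum.inl j)
      rw [h3 i j, Pi.single_apply]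
      rcases eq_or_ne i j with h | h
      · simp [h]
      · simp [h, Ne.symm h]
    · show -(B (e i) (e j)) = (Pi.single (Sum.inl i) (1:F) : Fin m ⊕ Fin m → F) (Sum.inr j)
      rw [h1 i j, neg_zero, Pi.single_apply, if_neg (by simp)]
    · show B (f i) (f j) = (Pi.single (Sum.inr i) (1:F) : Fin m ⊕ Fin m → F) (Sum.inl j)
      rw [h2 i j, Pi.single_apply, if_neg (by simp)]
    · show -(B (f i) (e j)) = (Pi.single (Sum.inr i) (1:F) : Fin m ⊕ Fin m → F) (Sum.inr j)
      rw [halt.neg_eq (f i) (e j), h3 j i, Pi.single_apply]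
      rcases eq_or_ne i j with h | h
      · simp [h]
      · simp [h, Ne.symm h]
  have li_single : LinearIndependent F (fun s : Fin m ⊕ Fin m => Pi.single s (1:F)) := by
    have hb := (Pi.basisFun F (Fin m ⊕ Fin m)).linearIndependent
    rwa [show ⇑(Pi.basisFun F (Fin m ⊕ Fin m)) = fun s => Pi.single s (1:F) from
      funext fun s => Pi.basisFun_apply F _ s] at hb
  have : LinearIndependent F (φ ∘ Sum.elim e f) := by
    rw [show φ ∘ Sum.elim e f = fun s => Pi.single s (1:F) from funext key]
    exact li_single
  exact LinearIndependent.of_comp φ this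

lemma sympseq_finrank_span (halt : B.IsAlt) {m : ℕ} {e f : Fin m → V}
    (hp : SympPred B m e f) :
    finrank F (Submodule.span F (Set.range (Sum.elim e f))) = 2 * m := by
  rw [finrank_span_eq_card (sympseq_li B halt hp)]
  simp [two_mul]

lemma sympseq_span_nondeg (halt : B.IsAlt) {m : ℕ} {e f : Fin m → V}
    (hp : SympPred B m e f) :
    (B.restrict (Submodule.span F (Set.range (Sum.elim e f)))).Nondegenerate := by
  classical
  obtain ⟨h1, h2, h3⟩ := hp
  refine (LinearMap.IsRefl.nondegenerate_iff_separatingLeft (B := B.restrict _) (fun x y hxy => halt.isRefl _ _ hxy)).mpr ?_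
  rintro ⟨v, hv⟩ h
  have hvf : ∀ j, B v (f j) = 0 := fun j => by
    simpa using h ⟨f j, Submodule.subset_span ⟨Sum.inr j, rfl⟩⟩
  have hve : ∀ j, B v (e j) = 0 := fun j => by
    simpa using h ⟨e j, Submodule.subset_span ⟨Sum.inl j, rfl⟩⟩
  obtain ⟨c, hc⟩ := (Submodule.mem_span_range_iff_exists_fun F).mp hv
  have expand : ∀ w : V, B v w = ∑ s : Fin m ⊕ Fin m, c s * B (Sum.elim e f s) w := by
    intro w
    rw [← hc]
    simp [map_sum, LinearMap.sum_apply, map_smul, smul_eq_mul]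
  have expand2 : ∀ w : V, B w v = ∑ s : Fin m ⊕ Fin m, c s * B w (Sum.elim e f s) := by
    intro w
    rw [← hc]
    simp [map_sum, map_smul, smul_eq_mul]
  have hcl : ∀ j, c (Sum.inl j) = 0 := by
    intro j
    have h0 := (expand (f j)).symm.trans (hvf j)
    rw [Fintype.sum_sum_type] at h0
    simp only [Sum.elim_inl, Sum.elim_inr] at h0
    have hA : ∑ i : Fin m, c (Sum.inl i) * B (e i) (f j) = c (Sum.inl j) := by
      rw [Finset.sum_congr rfl (fun i _ => by rw [h3 i j, mul_ite, mul_one, mul_zero]),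
        Finset.sum_ite_eq', if_pos (Finset.mem_univ j)]
    have hB : ∑ i : Fin m, c (Sum.inr i) * B (f i) (f j) = 0 :=
      Finset.sum_eq_zero (fun i _ => by rw [h2 i j, mul_zero])
    rw [hA, hB, add_zero] at h0
    exact h0
  have hcr : ∀ j, c (Sum.inr j) = 0 := by
    intro j
    have hbe : B (e j) v = 0 := alt_zero_comm B halt (hve j)
    have h0 := (expand2 (e j)).symm.trans hbe
    rw [Fintype.sum_sum_type] at h0
    simp only [Sum.elim_inl, Sum.elim_inr] at h0
    have hA : ∑ i : Fin m, c (Sum.inl i) * B (e j) (e i) = 0 :=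
      Finset.sum_eq_zero (fun i _ => by rw [h1 j i, mul_zero])
    have hB : ∑ i : Fin m, c (Sum.inr i) * B (e j) (f i) = c (Sum.inr j) := by
      rw [Finset.sum_congr rfl (fun i _ => by rw [h3 j i, mul_ite, mul_one, mul_zero]),
        Finset.sum_ite_eq, if_pos (Finset.mem_univ j)]
    rw [hA, hB, zero_add] at h0
    exact h0
  have hv0 : v = 0 := by
    rw [← hc]
    apply Finset.sum_eq_zero
    intro s _
    rcases s with i | i
    · rw [hcl i, zero_smul]
    · rw [hcr i, zero_smul]
  exact Subtype.ext hv0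

end Span

section Partition

variable [FiniteDimensional F V] (B : LinearMap.BilinForm F V)

def SS_span_equiv (halt : B.IsAlt) (m : ℕ) :
    SS B (⊤ : Submodule F V) m ≃
      Σ _W : {W : Submodule F V // finrank F W = 2*m ∧ (B.restrict W).Nondegenerate},
        SS B _W.1 m where
  toFun s :=
    ⟨⟨Submodule.span F (Set.range (Sum.elim s.1.1 s.1.2)),
        sympseq_finrank_span B halt s.2.2.2, sympseq_span_nondeg B halt s.2.2.2⟩,
      ⟨s.1, fun i => Submodule.subset_span ⟨Sum.inl i, rfl⟩,
        fun i => Submodule.subset_span ⟨Sum.inr i, rfl⟩, s.2.2.2⟩⟩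
  invFun x := ⟨x.2.1, fun _ => trivial, fun _ => trivial, x.2.2.2.2⟩
  left_inv s := rfl
  right_inv x := by
    obtain ⟨⟨W, hWr, hWnd⟩, ⟨⟨e, f⟩, hme, hmf, hp⟩⟩ := x
    have hspan : Submodule.span F (Set.range (Sum.elim e f)) = W := by
      apply Submodule.eq_of_le_of_finrank_le
      · rw [Submodule.span_le]
        rintro v ⟨s, rfl⟩
        rcases s with i | i
        · exact hme i
        · exact hmf i
      · rw [sympseq_finrank_span B halt hp, hWr]
    have haux : ∀ (W₁ W₂ : Submodule F V) (hW : W₁ = W₂) (s₁ : SS B W₁ m) (s₂ : SS B W₂ m),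
        s₁.1 = s₂.1 → HEq s₁ s₂ := by
      intro W₁ W₂ hW
      subst hW
      intro s₁ s₂ hh
      exact heq_of_eq (Subtype.ext hh)
    exact Sigma.ext (Subtype.ext hspan) (haux _ _ hspan _ _ rfl)

lemma count_nondeg_subspaces [Fintype F] (halt : B.IsAlt) (hnd : B.Nondegenerate) (m : ℕ) :
    Nat.card {W : Submodule F V // finrank F W = 2*m ∧ (B.restrict W).Nondegenerate} *
      (∏ i ∈ Finset.range m,
        ((Fintype.card F ^ (2*m - 2*i) - 1) * Fintype.card F ^ (2*m - 2*i - 1))) =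
    ∏ i ∈ Finset.range m,
      ((Fintype.card F ^ (finrank F V - 2*i) - 1) *
        Fintype.card F ^ (finrank F V - 2*i - 1)) := by
  classical
  have hfinV : Finite V := Module.finite_of_finite F
  have hfinSub : Finite (Submodule F V) :=
    Finite.of_injective (fun W => (W : Set V)) SetLike.coe_injective
  letI : Fintype {W : Submodule F V // finrank F W = 2*m ∧ (B.restrict W).Nondegenerate} :=
    Fintype.ofFinite _
  letI : ∀ W : {W : Submodule F V // finrank F W = 2*m ∧ (B.restrict W).Nondegenerate},
      Fintype (SS B W.1 m) := fun _ => Fintype.ofFinite _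
  have hfib : ∀ W : {W : Submodule F V // finrank F W = 2*m ∧ (B.restrict W).Nondegenerate},
      Fintype.card (SS B W.1 m) =
        ∏ i ∈ Finset.range m,
          ((Fintype.card F ^ (2*m - 2*i) - 1) * Fintype.card F ^ (2*m - 2*i - 1)) := by
    intro W
    rw [← Nat.card_eq_fintype_card, Nat.card_congr (SS_sub_equiv B W.1 m),
      SS_card m W.1 (B.restrict W.1) (fun x => halt x) W.2.2, W.2.1]
  have key : (∏ i ∈ Finset.range m,
      ((Fintype.card F ^ (finrank F V - 2*i) - 1) *
        Fintype.card F ^ (finrank F V - 2*i - 1))) =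
      Nat.card {W : Submodule F V // finrank F W = 2*m ∧ (B.restrict W).Nondegenerate} *
        (∏ i ∈ Finset.range m,
          ((Fintype.card F ^ (2*m - 2*i) - 1) * Fintype.card F ^ (2*m - 2*i - 1))) := by
    calc (∏ i ∈ Finset.range m,
        ((Fintype.card F ^ (finrank F V - 2*i) - 1) *
          Fintype.card F ^ (finrank F V - 2*i - 1)))
        = Nat.card (SS B (⊤ : Submodule F V) m) := (SS_card m V B halt hnd).symm
      _ = Nat.card ((_W : {W : Submodule F V //
            finrank F W = 2*m ∧ (B.restrict W).Nondegenerate}) × SS B _W.1 m) :=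
          Nat.card_congr (SS_span_equiv B halt m)
      _ = ∑ W : {W : Submodule F V // finrank F W = 2*m ∧ (B.restrict W).Nondegenerate},
            Fintype.card (SS B W.1 m) := by
          rw [Nat.card_eq_fintype_card, Fintype.card_sigma]
      _ = Nat.card {W : Submodule F V // finrank F W = 2*m ∧ (B.restrict W).Nondegenerate} *
            (∏ i ∈ Finset.range m,
              ((Fintype.card F ^ (2*m - 2*i) - 1) * Fintype.card F ^ (2*m - 2*i - 1))) := by
          rw [Finset.sum_congr rfl (fun W _ => hfib W), Finset.sum_const, Finset.card_univ,
            smul_eq_mul, Nat.card_eq_fintype_card]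
  exact key.symm

end Partition


lemma term_id (x : ℚ) (hx : 1 < x) (i r u : ℕ) :
    ((x^(2*r + 2*u + 2) - 1) * x^(2*r + 2*u + 1)) =
      (x^(2*r)) * (((x^2)^(i + u + 1 + r) - (x^2)^i) / ((x^2)^(i + u + 1) - (x^2)^i)) *
        ((x^(2*u + 2) - 1) * x^(2*u + 1)) := by
  have hx2 : (1:ℚ) < x^2 := by nlinarith
  have hlt : (x^2)^i < (x^2)^(i + u + 1) := by
    apply pow_lt_pow_right₀ hx2 (by omega)
  have hne : (x^2)^(i + u + 1) - (x^2)^i ≠ 0 := sub_ne_zero_of_ne (ne_of_gt hlt)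
  field_simp
  ring


/-- number of `k`-dimensional non-degenerate subspaces of a
non-degenerate symplectic (alternating) space of even dimension `t` over `F_q`. -/
theorem count_nondegenerate_subspaces_symplectic_fixed_dim
    (q t : ℕ) (hq : IsPrimePow q) (ht : 2 ≤ t) (hteven : Even t)
    (F : Type) [Field F] [Fintype F] (hF : Fintype.card F = q)
    (V : Type) [AddCommGroup V] [Module F V] [FiniteDimensional F V]
    (hdim : Module.finrank F V = t)
    (B : LinearMap.BilinForm F V)
    (halt : ∀ v : V, B v v = 0)
    (hnd : ∀ v : V, (∀ w : V, B v w = 0) → v = 0)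
    (k : ℕ) (hk1 : 1 ≤ k) (hk2 : k ≤ t - 1) :
    (Odd k →
      Nat.card {W : Submodule F V //
        Module.finrank F W = k ∧ ∀ v ∈ W, (∀ w ∈ W, B v w = 0) → v = 0} = 0) ∧
    (Even k →
      (Nat.card {W : Submodule F V //
        Module.finrank F W = k ∧ ∀ v ∈ W, (∀ w ∈ W, B v w = 0) → v = 0} : ℚ) =
        (q : ℚ) ^ (k * (t - k) / 2) * gbinom ((q : ℚ) ^ 2) (t / 2) (k / 2)) := by
  subst hF
  have hq2 : 2 ≤ Fintype.card F := Fintype.one_lt_card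
  have halt' : B.IsAlt := halt
  have hnd' : B.Nondegenerate :=
    (LinearMap.IsRefl.nondegenerate_iff_separatingLeft halt'.isRefl).mpr hnd
  have hiff : ∀ W : Submodule F V,
      ((∀ v ∈ W, (∀ w ∈ W, B v w = 0) → v = 0) ↔ (B.restrict W).Nondegenerate) := by
    intro W
    constructor
    · intro h
      refine (LinearMap.IsRefl.nondegenerate_iff_separatingLeft (B := B.restrict _) (fun x y hxy => halt'.isRefl _ _ hxy)).mpr ?_
      intro x hx
      exact Subtype.ext (h x.1 x.2 (fun w hw => by simpa using hx ⟨w, hw⟩))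
    · intro h v hvW hv
      exact Subtype.ext_iff.mp (h.1 ⟨v, hvW⟩ (fun y => by simpa using hv y.1 y.2))
  have hcardeq : ∀ j : ℕ, Nat.card {W : Submodule F V // Module.finrank F W = j ∧
      ∀ v ∈ W, (∀ w ∈ W, B v w = 0) → v = 0} =
      Nat.card {W : Submodule F V //
        Module.finrank F W = j ∧ (B.restrict W).Nondegenerate} :=
    fun j => Nat.card_congr (Equiv.subtypeEquivRight
      (fun W => and_congr_right (fun _ => hiff W)))
  constructor
  · intro hodd
    rw [hcardeq]
    have : IsEmpty {W : Submodule F V //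
        Module.finrank F W = k ∧ (B.restrict W).Nondegenerate} := by
      refine ⟨fun W => ?_⟩
      obtain ⟨W, hkW, hWnd⟩ := W
      have heven := even_finrank_of_alt_nondeg k W (B.restrict W) (fun x => halt x) hWnd hkW
      exact (Nat.not_even_iff_odd.mpr hodd) heven
    exact Nat.card_of_isEmpty
  · intro heven
    obtain ⟨m, hm⟩ := heven
    have hkm : k = 2*m := by omega
    obtain ⟨n, hn⟩ := hteven
    have htn : t = 2*n := by omega
    have hmn : m + 1 ≤ n := by omega
    have hm1 : 1 ≤ m := by omega
    rw [hcardeq]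
    have key := count_nondeg_subspaces B halt' hnd' m
    rw [hdim] at key
    set D : ℕ := ∏ i ∈ Finset.range m,
      ((Fintype.card F ^ (2*m - 2*i) - 1) * Fintype.card F ^ (2*m - 2*i - 1)) with hD
    have hDne : D ≠ 0 := by
      rw [hD, Finset.prod_ne_zero_iff]
      intro i hi
      rw [Finset.mem_range] at hi
      have h1 : 1 < Fintype.card F ^ (2*m - 2*i) := Nat.one_lt_pow (by omega) (by omega)
      have h2 : 0 < Fintype.card F ^ (2*m - 2*i - 1) := Nat.pow_pos (by omega)
      exact Nat.mul_ne_zero (by omega) (by omega)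
    rw [(show k*(t-k)/2 = m*(t-2*m) by
        rw [hkm, mul_assoc, Nat.mul_div_cancel_left _ (by norm_num : 0 < 2)]),
      (show t/2 = n by omega), (show k/2 = m by omega), hkm]
    set x : ℚ := (Fintype.card F : ℚ) with hx
    have hx1 : (1:ℚ) < x := by
      rw [hx]
      exact_mod_cast hq2
    have castS : ((∏ i ∈ Finset.range m,
        ((Fintype.card F ^ (t - 2*i) - 1) * Fintype.card F ^ (t - 2*i - 1)) : ℕ) : ℚ) =
        ∏ i ∈ Finset.range m, ((x^(t - 2*i) - 1) * x^(t - 2*i - 1)) := by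
      rw [Nat.cast_prod]
      refine Finset.prod_congr rfl ?_
      intro i _
      have h1 : 1 ≤ Fintype.card F ^ (t - 2*i) := Nat.one_le_pow _ _ (by omega)
      rw [Nat.cast_mul, Nat.cast_sub h1, Nat.cast_pow, Nat.cast_pow, Nat.cast_one]
    have castD : ((D : ℕ) : ℚ) =
        ∏ i ∈ Finset.range m, ((x^(2*m - 2*i) - 1) * x^(2*m - 2*i - 1)) := by
      rw [hD, Nat.cast_prod]
      refine Finset.prod_congr rfl ?_
      intro i _
      have h1 : 1 ≤ Fintype.card F ^ (2*m - 2*i) := Nat.one_le_pow _ _ (by omega)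
      rw [Nat.cast_mul, Nat.cast_sub h1, Nat.cast_pow, Nat.cast_pow, Nat.cast_one]
    have hterm : ∀ i ∈ Finset.range m, ((x^(t - 2*i) - 1) * x^(t - 2*i - 1)) =
        (x^(t - 2*m) * (((x^2)^n - (x^2)^i) / ((x^2)^m - (x^2)^i))) *
          ((x^(2*m - 2*i) - 1) * x^(2*m - 2*i - 1)) := by
      intro i hi
      rw [Finset.mem_range] at hi
      have e1 : t - 2*i = 2*(n-m) + 2*(m-i-1) + 2 := by omega
      have e2 : t - 2*i - 1 = 2*(n-m) + 2*(m-i-1) + 1 := by omega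
      have e3 : 2*m - 2*i = 2*(m-i-1) + 2 := by omega
      have e4 : 2*m - 2*i - 1 = 2*(m-i-1) + 1 := by omega
      have e5 : t - 2*m = 2*(n-m) := by omega
      have e6 : n = i + (m-i-1) + 1 + (n-m) := by omega
      have e7 : m = i + (m-i-1) + 1 := by omega
      have h := term_id x hx1 i (n-m) (m-i-1)
      rw [← e6, ← e7, ← e1, ← e2, ← e3, ← e4, ← e5, ← mul_assoc] at h
      rw [h, mul_assoc]
    have hmain : (∏ i ∈ Finset.range m, ((x^(t - 2*i) - 1) * x^(t - 2*i - 1))) =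
        (x^(m*(t - 2*m)) * gbinom (x^2) n m) *
          ∏ i ∈ Finset.range m, ((x^(2*m - 2*i) - 1) * x^(2*m - 2*i - 1)) := by
      rw [Finset.prod_congr rfl hterm, Finset.prod_mul_distrib, Finset.prod_mul_distrib,
        Finset.prod_const, Finset.card_range, ← pow_mul, mul_comm (t - 2*m) m]
      rfl
    have h1 : ((Nat.card {W : Submodule F V //
        Module.finrank F W = 2*m ∧ (B.restrict W).Nondegenerate} : ℕ) : ℚ) * (D : ℚ) =
        ∏ i ∈ Finset.range m, ((x^(t - 2*i) - 1) * x^(t - 2*i - 1)) := by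
      rw [← castS]
      exact_mod_cast congrArg (Nat.cast : ℕ → ℚ) key
    have hDQne : (D : ℚ) ≠ 0 := Nat.cast_ne_zero.mpr hDne
    apply mul_right_cancel₀ hDQne
    rw [h1, hmain, ← castD]
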